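/- arXiv:2207.01309 — 4 statements merged into one kernel-verified Lean document; each statement's English description precedes it below -/
import Mathlib

section
/- Let R be a commutative noetherian ring and Φ a slice sp-filtration of Spec R. Then Φ satisfies the weak Cousin condition if and only if Φ is a codimension filtration, i.e., the associated function f_Φ : Spec R → ℤ is a codimension function on Spec R. -/
/-- A subset of `Spec R` is specialization closed if it is an upper set with respect to
inclusion of primes. An *sp-filtration* of `Spec R` is a decreasing family of
specialization closed subsets indexed by `ℤ`. -/
def IsSpFiltration {R : Type*} [CommRing R] (Φ : ℤ → Set (PrimeSpectrum R)) : Prop :=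
  (∀ n : ℤ, ∀ p ∈ Φ n, ∀ q : PrimeSpectrum R, p ≤ q → q ∈ Φ n) ∧
    ∀ n : ℤ, Φ (n + 1) ⊆ Φ n

/-- An sp-filtration is non-degenerate if the union of its members is all of `Spec R`
and their intersection is empty. -/
def IsNondegenerate {R : Type*} [CommRing R] (Φ : ℤ → Set (PrimeSpectrum R)) : Prop :=
  (⋃ n : ℤ, Φ n) = Set.univ ∧ (⋂ n : ℤ, Φ n) = ∅

/-- A *slice* sp-filtration is a non-degenerate sp-filtration `Φ` such that for each `n ∈ ℤ`
there is no strict inclusion between primes in `Φ(n) \ Φ(n+1)`. -/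
def IsSliceSpFiltration {R : Type*} [CommRing R] (Φ : ℤ → Set (PrimeSpectrum R)) : Prop :=
  IsSpFiltration Φ ∧ IsNondegenerate Φ ∧
    ∀ n : ℤ, ∀ p ∈ Φ n \ Φ (n + 1), ∀ q ∈ Φ n \ Φ (n + 1), ¬ p < q

/-- A codimension function on `Spec R` is a function `d : Spec R → ℤ` such that
`d(q) = d(p) + 1` for every saturated chain `p ⊊ q` of length 1, i.e. whenever `q`
covers `p` in the inclusion order. -/
def IsCodimFunction {R : Type*} [CommRing R] (d : PrimeSpectrum R → ℤ) : Prop :=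
  ∀ p q : PrimeSpectrum R, p ⋖ q → d q = d p + 1

/-- An sp-filtration `Φ` satisfies the weak Cousin condition if for every `n ∈ ℤ` and every
saturated chain `p ⊊ q` of primes, `q ∈ Φ(n)` implies `p ∈ Φ(n − 1)`. -/
def SatisfiesWeakCousin {R : Type*} [CommRing R] (Φ : ℤ → Set (PrimeSpectrum R)) : Prop :=
  ∀ n : ℤ, ∀ p q : PrimeSpectrum R, p ⋖ q → q ∈ Φ n → p ∈ Φ (n - 1)

/-- A slice sp-filtration of the spectrum of a commutative noetherian ring satisfies the
weak Cousin condition if and only if it is a codimension filtration, i.e. it is of the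
form `Φ_d(n) = {p | d(p) > n}` for a codimension function `d` (necessarily `d = f_Φ`). -/
theorem stmt_3 (R : Type*) [CommRing R] [IsNoetherianRing R]
    (Φ : ℤ → Set (PrimeSpectrum R)) (hΦ : IsSliceSpFiltration Φ) :
    SatisfiesWeakCousin Φ ↔
      ∃ d : PrimeSpectrum R → ℤ, IsCodimFunction d ∧
        ∀ n : ℤ, Φ n = {p : PrimeSpectrum R | n < d p} := by
  obtain ⟨⟨hspec, hdec⟩, ⟨hunion, hinter⟩, hslice⟩ := hΦ
  -- membership is downward closed in `n`
  have hdown : ∀ p : PrimeSpectrum R, ∀ m n : ℤ, m ≤ n → p ∈ Φ n → p ∈ Φ m := by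
    intro p m n hmn
    exact Int.le_induction (motive := fun n _ => p ∈ Φ n → p ∈ Φ m) id
      (fun k _ ih h => ih (hdec k h)) n hmn
  -- for each prime, the greatest n with p ∈ Φ n exists
  have hex : ∀ p : PrimeSpectrum R,
      ∃ m : ℤ, p ∈ Φ m ∧ ∀ k : ℤ, p ∈ Φ k → k ≤ m := by
    intro p
    have h1 : ∃ n : ℤ, p ∈ Φ n := by
      have : p ∈ ⋃ n : ℤ, Φ n := hunion ▸ Set.mem_univ p
      simpa using this
    have h2 : ∃ n : ℤ, p ∉ Φ n := by
      by_contra h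
      push_neg at h
      have : p ∈ ⋂ n : ℤ, Φ n := Set.mem_iInter.mpr h
      rw [hinter] at this
      exact this
    obtain ⟨b, hb⟩ := h2
    have hbdd : ∀ z ∈ {n : ℤ | p ∈ Φ n}, z ≤ b - 1 := by
      intro z hz
      by_contra hzb
      push_neg at hzb
      exact hb (hdown p b z (by omega) hz)
    obtain ⟨m, hm, hmax⟩ := Int.exists_greatest_of_bdd ⟨b - 1, hbdd⟩ h1
    exact ⟨m, hm, hmax⟩
  classical
  set d : PrimeSpectrum R → ℤ := fun p => (hex p).choose + 1 with hd_def
  have hmem : ∀ (p : PrimeSpectrum R) (n : ℤ), p ∈ Φ n ↔ n < d p := by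
    intro p n
    obtain ⟨hm, hmax⟩ := (hex p).choose_spec
    constructor
    · intro h
      have := hmax n h
      simp only [hd_def]
      omega
    · intro h
      exact hdown p n _ (by simp only [hd_def] at h; omega) hm
  constructor
  · intro hwc
    refine ⟨d, ?_, ?_⟩
    · intro p q hpq
      have hplt : p < q := hpq.lt
      -- d p ≤ d q
      have h1 : d p ≤ d q := by
        have hp : p ∈ Φ (d p - 1) := (hmem p _).mpr (by omega)
        have hq : q ∈ Φ (d p - 1) := hspec _ p hp q hplt.le
        have := (hmem q _).mp hq
        omega
      -- d q ≤ d p + 1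
      have h2 : d q ≤ d p + 1 := by
        have hq : q ∈ Φ (d q - 1) := (hmem q _).mpr (by omega)
        have hp : p ∈ Φ (d q - 1 - 1) := hwc _ p q hpq hq
        have := (hmem p _).mp hp
        omega
      -- d p ≠ d q by the slice condition
      have h3 : d p ≠ d q := by
        intro heq
        apply hslice (d p - 1) p ⟨(hmem p _).mpr (by omega), ?_⟩ q
          ⟨(hmem q _).mpr (by omega), ?_⟩ hplt
        · intro h
          have := (hmem p _).mp h
          omega
        · intro h
          have := (hmem q _).mp h
          omega
      omega
    · intro n
      ext p
      exact hmem p n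
  · rintro ⟨e, he, hΦe⟩ n p q hpq hq
    rw [hΦe] at hq ⊢
    have := he p q hpq
    simp only [Set.mem_setOf_eq] at hq ⊢
    omega
end

section
/- Let R be a commutative noetherian ring and Φ a non-degenerate sp-filtration of Spec R. Then Φ is a codimension filtration (i.e., f_Φ is a codimension function) if and only if Φ satisfies the strong Cousin condition. -/
/-- An sp-filtration `Φ` satisfies the strong Cousin condition if for every `n ∈ ℤ` and
every saturated chain `p ⊊ q` of primes, `q ∈ Φ(n)` if and only if `p ∈ Φ(n − 1)`. -/
def SatisfiesStrongCousin {R : Type*} [CommRing R] (Φ : ℤ → Set (PrimeSpectrum R)) : Prop :=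
  ∀ n : ℤ, ∀ p q : PrimeSpectrum R, p ⋖ q → (q ∈ Φ n ↔ p ∈ Φ (n - 1))

/-- A non-degenerate sp-filtration of the spectrum of a commutative noetherian ring is a
codimension filtration (i.e. of the form `Φ_d(n) = {p | d(p) > n}` for a codimension
function `d`, equivalently `f_Φ` is a codimension function) if and only if it satisfies
the strong Cousin condition. -/
theorem stmt_4 (R : Type*) [CommRing R] [IsNoetherianRing R]
    (Φ : ℤ → Set (PrimeSpectrum R)) (hΦ : IsSpFiltration Φ) (hnd : IsNondegenerate Φ) :
    (∃ d : PrimeSpectrum R → ℤ, IsCodimFunction d ∧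
        ∀ n : ℤ, Φ n = {p : PrimeSpectrum R | n < d p}) ↔
      SatisfiesStrongCousin Φ := by
  constructor
  · rintro ⟨d, hd, hΦd⟩ n p q hpq
    rw [hΦd n, hΦd (n - 1)]
    simp only [Set.mem_setOf_eq, hd p q hpq]
    omega
  · intro hc
    have mono : ∀ m n : ℤ, m ≤ n → Φ n ⊆ Φ m := by
      intro m n h
      refine Int.le_induction (motive := fun n _ => Φ n ⊆ Φ m) ?_ ?_ n h
      · exact subset_rfl
      · intro n _ ih
        exact (hΦ.2 n).trans ih
    set d : PrimeSpectrum R → ℤ := fun p => sInf {n : ℤ | p ∉ Φ n} with hd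
    have hmem : ∀ p n, p ∈ Φ n ↔ n < d p := by
      intro p n
      have hne : {n : ℤ | p ∉ Φ n}.Nonempty := by
        have : p ∉ ⋂ n : ℤ, Φ n := by rw [hnd.2]; exact Set.notMem_empty p
        simpa [Set.mem_iInter, Set.Nonempty] using this
      obtain ⟨k, hk⟩ : ∃ k, p ∈ Φ k := by
        have : p ∈ ⋃ n : ℤ, Φ n := by rw [hnd.1]; trivial
        simpa using this
      have hbdd : BddBelow {n : ℤ | p ∉ Φ n} := by
        refine ⟨k, fun m hm => ?_⟩
        by_contra h
        exact hm (mono m k (by omega) hk)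
      have h1 : p ∉ Φ (d p) := Int.csInf_mem hne hbdd
      constructor
      · intro hp
        by_contra h
        exact h1 (mono (d p) n (by omega) hp)
      · intro h
        by_contra hp
        have h4 : d p ≤ n := csInf_le hbdd hp
        omega
    refine ⟨d, fun p q hpq => ?_, fun n => Set.ext fun p => hmem p n⟩
    have h1 := (hc (d p) p q hpq).mpr (by rw [hmem]; omega)
    have h2 := fun h => (hc (d p + 1) p q hpq).mp h
    rw [hmem] at h1
    by_cases h3 : q ∈ Φ (d p + 1)
    · have := h2 h3
      rw [hmem] at this
      omega
    · rw [hmem] at h3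
      omega
end

section
/- Let φ : R → A be a finite homomorphism of commutative noetherian rings (i.e., A is finitely generated as an R-module via φ) and let f : Spec A → Spec R be the induced map, f(P) = φ⁻¹(P). If Φ is a slice sp-filtration of Spec R, then the preimage f⁻¹Φ, defined by (f⁻¹Φ)(n) = f⁻¹(Φ(n)), is a slice sp-filtration of Spec A. -/
/-- Let `φ : R → A` be a finite homomorphism of commutative noetherian rings (i.e. `A` is
finitely generated as an `R`-module via `φ`) and `f : Spec A → Spec R` the induced map
`P ↦ φ⁻¹(P)`. If `Φ` is a slice sp-filtration of `Spec R`, then the preimage sp-filtration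
`f⁻¹Φ`, defined by `(f⁻¹Φ)(n) = f⁻¹(Φ(n))`, is a slice sp-filtration of `Spec A`. -/
theorem stmt_10 {R A : Type*} [CommRing R] [IsNoetherianRing R] [CommRing A]
    [IsNoetherianRing A] (φ : R →+* A) (hφ : φ.Finite)
    (Φ : ℤ → Set (PrimeSpectrum R)) (hΦ : IsSliceSpFiltration Φ) :
    IsSliceSpFiltration (fun n => PrimeSpectrum.comap φ ⁻¹' Φ n) := by
  obtain ⟨⟨hsp, hdec⟩, ⟨hU, hI⟩, hslice⟩ := hΦ
  refine ⟨⟨?_, fun n P hP => hdec n hP⟩, ⟨?_, ?_⟩, ?_⟩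
  · intro n P hP Q hPQ
    exact hsp n _ hP _ (Ideal.comap_mono hPQ)
  · ext P
    simp only [Set.mem_iUnion, Set.mem_preimage, Set.mem_univ, iff_true]
    have := Set.eq_univ_iff_forall.mp hU (PrimeSpectrum.comap φ P)
    simpa using this
  · ext P
    simp only [Set.mem_iInter, Set.mem_preimage, Set.mem_empty_iff_false, iff_false]
    intro h
    have := Set.eq_empty_iff_forall_notMem.mp hI (PrimeSpectrum.comap φ P)
    exact this (Set.mem_iInter.mpr h)
  · intro n P hP Q hQ hPQ
    have h1 : PrimeSpectrum.comap φ P ≤ PrimeSpectrum.comap φ Q := Ideal.comap_mono hPQ.le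
    rcases lt_or_eq_of_le h1 with h2 | h2
    · exact hslice n _ hP _ hQ h2
    · -- incomparability: P < Q with same contraction, contradiction via integrality
      letI : Algebra R A := φ.toAlgebra
      haveI : Module.Finite R A := hφ
      obtain ⟨hle, x, hxQ, hxP⟩ := SetLike.lt_iff_le_and_exists.mp
        (show P.asIdeal < Q.asIdeal from hPQ)
      haveI := P.isPrime
      have := Ideal.comap_lt_comap_of_integral_mem_sdiff (R := R)
        hle ⟨hxQ, hxP⟩ (IsIntegral.of_finite R x)
      have heq : P.asIdeal.comap (algebraMap R A) = Q.asIdeal.comap (algebraMap R A) := by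
        have := congrArg PrimeSpectrum.asIdeal h2
        exact this
      exact absurd heq this.ne
end

section
/- Let R be a commutative noetherian local ring with maximal ideal m, let I be an ideal of R with I ⊆ m, let P be a projective R-module, and let N be a submodule of P with I·N = N. Then N = 0. -/
/-- Let `R` be a commutative noetherian local ring with maximal ideal `m`, let `I ⊆ m` be an
ideal, let `P` be a projective `R`-module, and let `N` be a submodule of `P` with
`I·N = N`. Then `N = 0`. -/
theorem stmt_15 {R : Type*} [CommRing R] [IsNoetherianRing R] [IsLocalRing R]
    (I : Ideal R) (hI : I ≤ IsLocalRing.maximalIdeal R)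
    (P : Type*) [AddCommGroup P] [Module R P] [Module.Projective R P]
    (N : Submodule R P) (hN : I • N = N) :
    N = ⊥ := by
  -- iterate: N = I^n • N
  have hpow : ∀ n : ℕ, (I ^ n) • N = N := by
    intro n
    induction n with
    | zero => simp
    | succ n ih => rw [pow_succ, mul_smul, hN, ih]
  obtain ⟨s, hs⟩ := Module.projective_def.mp (inferInstance : Module.Projective R P)
  have hIbot : ⨅ n : ℕ, I ^ n = ⊥ :=
    Ideal.iInf_pow_eq_bot_of_isLocalRing I
      (fun h => (IsLocalRing.maximalIdeal.isMaximal R).ne_top (top_le_iff.mp (h ▸ hI)))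
  ext x
  simp only [Submodule.mem_bot]
  constructor
  · intro hx
    -- show s x = 0, then x = 0
    have hsx : s x = 0 := by
      ext i
      have hcoord : ∀ n : ℕ, (s x) i ∈ I ^ n := by
        intro n
        have hx' : x ∈ (I ^ n) • N := (hpow n).symm ▸ hx
        have : s x ∈ ((I ^ n) • N).map s := Submodule.mem_map_of_mem hx'
        rw [Submodule.map_smul''] at this
        have h2 : (s x) i ∈ ((I ^ n) • N.map s).map (Finsupp.lapply i) :=
          Submodule.mem_map_of_mem this
        rw [Submodule.map_smul''] at h2
        have h3 : (I ^ n) • (N.map s).map (Finsupp.lapply i) ≤ (I ^ n) • (⊤ : Submodule R R) :=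
          smul_mono_right _ le_top
        have h4 := h3 h2
        simpa using h4
      have : (s x) i ∈ ⨅ n : ℕ, I ^ n := Submodule.mem_iInf _ |>.mpr hcoord
      rw [hIbot] at this
      simpa using this
    have := hs x
    rw [hsx] at this
    simpa using this.symm
  · intro h; rw [h]; exact N.zero_mem
end
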